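/- Set u₁ = v₂, u₂ = v₁ + v₂ + 2w₁, u₃ = v₁ + 2w₁ - w₂, u₄ = v₁ + w₁ - w₂ in ℚ⁶. Then u₁^T B_Q u₁ ∈ 2ℤ, u₂^T B_Q u₂ ∈ 2ℤ, u₃^T B_Q u₃ - 1/4 ∈ 2ℤ, u₄^T B_Q u₄ - 1/4 ∈ 2ℤ, u₁^T B_Q u₂ + 1/2 ∈ ℤ, and uᵢ^T B_Q uⱼ ∈ ℤ for all other pairs i ≠ j. (Thus, in the basis u₁,u₂,u₃,u₄ of the discriminant group, the discriminant quadratic form of NS(X) = U ⊕ E₈ ⊕ Q is represented by the matrix [[0,-1/2,0,0],[-1/2,0,0,0],[0,0,1/4,0],[0,0,0,1/4]], with diagonal entries taken modulo 2ℤ and off-diagonal entries modulo ℤ.) -/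

import Mathlib

open Matrix

/-- The Gram matrix `B_Q` (over `ℚ`) of the rank-6 lattice `Q` such that the Néron–Severi
lattice of a triple-double K3 surface with minimal Picard number is isometric to
`U ⊕ E₈ ⊕ Q`. -/
def B_Q : Matrix (Fin 6) (Fin 6) ℚ :=
  !![-2,  0,  1,   0,  2,  -1;
      0, -6, -1,  -4,  4,  -5;
      1, -1, -8,   6,  2,   0;
      0, -4,  6, -16,  4,  -2;
      2,  4,  2,   4, -8,   6;
     -1, -5,  0,  -2,  6, -12]

def v₁ : Fin 6 → ℚ := ![1/2, -1/2, 0, 0, 1/2, 0]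
def v₂ : Fin 6 → ℚ := ![-1/2, 1/2, 0, 0, 0, 0]
def w₁ : Fin 6 → ℚ := ![1/2, 0, 0, -1/4, 0, 0]
def w₂ : Fin 6 → ℚ := ![0, 0, 1/4, -1/4, -1/4, -1/4]

/-- The vectors `u₁ = v₂`, `u₂ = v₁ + v₂ + 2w₁`, `u₃ = v₁ + 2w₁ - w₂`,
`u₄ = v₁ + w₁ - w₂`. -/
def u : Fin 4 → (Fin 6 → ℚ) :=
  ![v₂, v₁ + v₂ + (2 : ℚ) • w₁, v₁ + (2 : ℚ) • w₁ - w₂, v₁ + w₁ - w₂]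

lemma k02 : (u 0) ⬝ᵥ (B_Q *ᵥ u 2) = ((4 : ℤ) : ℚ) := by norm_num [u, v₁, v₂, w₁, w₂, B_Q, mulVec, dotProduct, Fin.sum_univ_succ, Matrix.cons_val_two, Matrix.cons_val_three, vecHead, vecTail]
lemma k03 : (u 0) ⬝ᵥ (B_Q *ᵥ u 3) = ((3 : ℤ) : ℚ) := by norm_num [u, v₁, v₂, w₁, w₂, B_Q, mulVec, dotProduct, Fin.sum_univ_succ, Matrix.cons_val_two, Matrix.cons_val_three, vecHead, vecTail]
lemma k12 : (u 1) ⬝ᵥ (B_Q *ᵥ u 2) = ((-8 : ℤ) : ℚ) := by norm_num [u, v₁, v₂, w₁, w₂, B_Q, mulVec, dotProduct, Fin.sum_univ_succ, Matrix.cons_val_two, Matrix.cons_val_three, vecHead, vecTail]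
lemma k13 : (u 1) ⬝ᵥ (B_Q *ᵥ u 3) = ((-5 : ℤ) : ℚ) := by norm_num [u, v₁, v₂, w₁, w₂, B_Q, mulVec, dotProduct, Fin.sum_univ_succ, Matrix.cons_val_two, Matrix.cons_val_three, vecHead, vecTail]
lemma k20 : (u 2) ⬝ᵥ (B_Q *ᵥ u 0) = ((4 : ℤ) : ℚ) := by norm_num [u, v₁, v₂, w₁, w₂, B_Q, mulVec, dotProduct, Fin.sum_univ_succ, Matrix.cons_val_two, Matrix.cons_val_three, vecHead, vecTail]
lemma k21 : (u 2) ⬝ᵥ (B_Q *ᵥ u 1) = ((-8 : ℤ) : ℚ) := by norm_num [u, v₁, v₂, w₁, w₂, B_Q, mulVec, dotProduct, Fin.sum_univ_succ, Matrix.cons_val_two, Matrix.cons_val_three, vecHead, vecTail]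
lemma k23 : (u 2) ⬝ᵥ (B_Q *ᵥ u 3) = ((-9 : ℤ) : ℚ) := by norm_num [u, v₁, v₂, w₁, w₂, B_Q, mulVec, dotProduct, Fin.sum_univ_succ, Matrix.cons_val_two, Matrix.cons_val_three, vecHead, vecTail]
lemma k30 : (u 3) ⬝ᵥ (B_Q *ᵥ u 0) = ((3 : ℤ) : ℚ) := by norm_num [u, v₁, v₂, w₁, w₂, B_Q, mulVec, dotProduct, Fin.sum_univ_succ, Matrix.cons_val_two, Matrix.cons_val_three, vecHead, vecTail]
lemma k31 : (u 3) ⬝ᵥ (B_Q *ᵥ u 1) = ((-5 : ℤ) : ℚ) := by norm_num [u, v₁, v₂, w₁, w₂, B_Q, mulVec, dotProduct, Fin.sum_univ_succ, Matrix.cons_val_two, Matrix.cons_val_three, vecHead, vecTail]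
lemma k32 : (u 3) ⬝ᵥ (B_Q *ᵥ u 2) = ((-9 : ℤ) : ℚ) := by norm_num [u, v₁, v₂, w₁, w₂, B_Q, mulVec, dotProduct, Fin.sum_univ_succ, Matrix.cons_val_two, Matrix.cons_val_three, vecHead, vecTail]

/-- In the basis `u₁, u₂, u₃, u₄` of the discriminant group, the discriminant quadratic
form of `NS(X) = U ⊕ E₈ ⊕ Q` is represented by the matrix
`[[0,-1/2,0,0],[-1/2,0,0,0],[0,0,1/4,0],[0,0,0,1/4]]` (diagonal entries modulo `2ℤ`,
off-diagonal entries modulo `ℤ`). -/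
theorem stmt_6 :
    (∃ k : ℤ, (u 0) ⬝ᵥ (B_Q *ᵥ u 0) = 2 * k) ∧
    (∃ k : ℤ, (u 1) ⬝ᵥ (B_Q *ᵥ u 1) = 2 * k) ∧
    (∃ k : ℤ, (u 2) ⬝ᵥ (B_Q *ᵥ u 2) - 1/4 = 2 * k) ∧
    (∃ k : ℤ, (u 3) ⬝ᵥ (B_Q *ᵥ u 3) - 1/4 = 2 * k) ∧
    (∃ n : ℤ, (u 0) ⬝ᵥ (B_Q *ᵥ u 1) + 1/2 = n) ∧
    (∀ i j : Fin 4, i ≠ j → ¬(i = 0 ∧ j = 1) → ¬(i = 1 ∧ j = 0) →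
      ∃ n : ℤ, (u i) ⬝ᵥ (B_Q *ᵥ u j) = n) := by
  refine ⟨⟨-1, by norm_num [u, v₁, v₂, w₁, w₂, B_Q, mulVec, dotProduct, Fin.sum_univ_succ, Matrix.cons_val_two, Matrix.cons_val_three, vecHead, vecTail]⟩, ⟨-4, by norm_num [u, v₁, v₂, w₁, w₂, B_Q, mulVec, dotProduct, Fin.sum_univ_succ, Matrix.cons_val_two, Matrix.cons_val_three, vecHead, vecTail]⟩, ⟨-6, by norm_num [u, v₁, v₂, w₁, w₂, B_Q, mulVec, dotProduct, Fin.sum_univ_succ, Matrix.cons_val_two, Matrix.cons_val_three, vecHead, vecTail]⟩, ⟨-4, by norm_num [u, v₁, v₂, w₁, w₂, B_Q, mulVec, dotProduct, Fin.sum_univ_succ, Matrix.cons_val_two, Matrix.cons_val_three, vecHead, vecTail]⟩, ⟨3, by norm_num [u, v₁, v₂, w₁, w₂, B_Q, mulVec, dotProduct, Fin.sum_univ_succ, Matrix.cons_val_two, Matrix.cons_val_three, vecHead, vecTail]⟩, ?_⟩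
  intro i j h1 h2 h3
  have hi : i = 0 ∨ i = 1 ∨ i = 2 ∨ i = 3 := by omega
  have hj : j = 0 ∨ j = 1 ∨ j = 2 ∨ j = 3 := by omega
  rcases hi with rfl | rfl | rfl | rfl <;> rcases hj with rfl | rfl | rfl | rfl <;>
    first
      | (exfalso; revert h1 h2 h3; decide)
      | exact ⟨4, k02⟩
      | exact ⟨3, k03⟩
      | exact ⟨-8, k12⟩
      | exact ⟨-5, k13⟩
      | exact ⟨4, k20⟩
      | exact ⟨-8, k21⟩
      | exact ⟨-9, k23⟩
      | exact ⟨3, k30⟩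
      | exact ⟨-5, k31⟩
      | exact ⟨-9, k32⟩
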